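/- In a median graph, two Θ-classes E_i and E_j are orthogonal if and only if the four sets H_i' ∩ H_j', H_i'' ∩ H_j', H_i' ∩ H_j'' and H_i'' ∩ H_j'' are all nonempty (i.e. the splits {H_i',H_i''} and {H_j',H_j''} are incompatible). -/

import Mathlib

namespace MedianPaper

variable {V : Type*}

/-- The metric interval `I(u,v)`: vertices on shortest `(u,v)`-paths. -/
def interval (G : SimpleGraph V) (u v : V) : Set V :=
  {w | G.dist u w + G.dist w v = G.dist u v}

/-- A median graph: a connected graph in which every triple of vertices
has a unique median. -/
def MedianGraph (G : SimpleGraph V) : Prop :=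
  G.Connected ∧ ∀ x y z : V, ∃! m : V,
    m ∈ interval G x y ∧ m ∈ interval G y z ∧ m ∈ interval G z x

/-- `u v x y` span a 4-cycle `u-v-y-x-u`, with opposite edge pairs
`(uv, xy)` and `(ux, vy)`. -/
def IsSquare (G : SimpleGraph V) (u v x y : V) : Prop :=
  G.Adj u v ∧ G.Adj x y ∧ G.Adj u x ∧ G.Adj v y ∧ u ≠ y ∧ v ≠ x

/-- Two edges are in relation Θ₀ if they are opposite edges of a common 4-cycle. -/
def Theta0 (G : SimpleGraph V) (e f : Sym2 V) : Prop :=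
  ∃ u v x y : V, IsSquare G u v x y ∧ e = s(u, v) ∧ f = s(x, y)

/-- Θ : the reflexive-transitive closure of Θ₀ on the edges of `G`. -/
def Theta (G : SimpleGraph V) (e f : Sym2 V) : Prop :=
  e ∈ G.edgeSet ∧ f ∈ G.edgeSet ∧ Relation.ReflTransGen (Theta0 G) e f

/-- The Θ-classes of `G`: equivalence classes of edges under Θ. -/
def ThetaClass (G : SimpleGraph V) (C : Set (Sym2 V)) : Prop :=
  ∃ e ∈ G.edgeSet, C = {f | Theta G e f}

/-- The edge set `C` separates `u` from `v` : they lie in different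
components of `G` minus `C`. -/
def Separates (G : SimpleGraph V) (C : Set (Sym2 V)) (u v : V) : Prop :=
  ¬ (G.deleteEdges C).Reachable u v

/-- The signature `σ_{u,v}`: Θ-classes separating `u` from `v`. -/
def signature (G : SimpleGraph V) (u v : V) : Set (Set (Sym2 V)) :=
  {C | ThetaClass G C ∧ Separates G C u v}

/-- `H`, `H'` are the two connected components (halfspaces) of `G` deprived
of the edges in `C`. -/
def IsHalfspacePair (G : SimpleGraph V) (C : Set (Sym2 V)) (H H' : Set V) : Prop :=
  H.Nonempty ∧ H'.Nonempty ∧ Disjoint H H' ∧ H ∪ H' = Set.univ ∧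
  (∀ x ∈ H, ∀ y ∈ H, (G.deleteEdges C).Reachable x y) ∧
  (∀ x ∈ H', ∀ y ∈ H', (G.deleteEdges C).Reachable x y) ∧
  (∀ x ∈ H, ∀ y ∈ H', ¬ (G.deleteEdges C).Reachable x y)

/-- The boundary of a halfspace `H` of the Θ-class `C` : vertices of `H`
incident to an edge of `C`. -/
def boundarySet (G : SimpleGraph V) (C : Set (Sym2 V)) (H : Set V) : Set V :=
  {x | x ∈ H ∧ ∃ y, G.Adj x y ∧ s(x, y) ∈ C}

/-- Orthogonality of Θ-classes: there is a common square using both. -/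
def Orthogonal (G : SimpleGraph V) (C₁ C₂ : Set (Sym2 V)) : Prop :=
  ∃ u v x y : V, IsSquare G u v x y ∧
    s(u, v) ∈ C₁ ∧ s(x, y) ∈ C₁ ∧ s(u, x) ∈ C₂ ∧ s(v, y) ∈ C₂

/-- A pairwise orthogonal family (POF) of Θ-classes. -/
def IsPOF (G : SimpleGraph V) (X : Set (Set (Sym2 V))) : Prop :=
  (∀ C ∈ X, ThetaClass G C) ∧
  ∀ C ∈ X, ∀ C' ∈ X, C ≠ C' → Orthogonal G C C'

/-- The `k`-dimensional hypercube graph, on subsets of `{1,…,k}`;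
two subsets are adjacent iff their symmetric difference has one element. -/
def cubeGraph (k : ℕ) : SimpleGraph (Finset (Fin k)) where
  Adj A B := (symmDiff A B).card = 1
  symm := by
    constructor
    intro A B h
    rwa [symmDiff_comm] at h
  loopless := by
    constructor
    intro A h
    simp [symmDiff_self] at h

/-- `S` induces a hypercube of dimension `k` in `G`. -/
def IsCubeDim (G : SimpleGraph V) (S : Set V) (k : ℕ) : Prop :=
  Nonempty ((G.induce S) ≃g cubeGraph k)

/-- `S` induces a hypercube in `G`. -/
def IsInducedCube (G : SimpleGraph V) (S : Set V) : Prop :=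
  ∃ k, IsCubeDim G S k

/-- The dimension of `G` is `d`: the largest dimension of an induced hypercube. -/
def GraphDim (G : SimpleGraph V) (d : ℕ) : Prop :=
  (∃ S : Set V, IsCubeDim G S d) ∧ ∀ (S : Set V) (k : ℕ), IsCubeDim G S k → k ≤ d

/-- The Θ-classes of the edges of the induced subgraph on `S`. -/
def cubeClasses (G : SimpleGraph V) (S : Set V) : Set (Set (Sym2 V)) :=
  {C | ThetaClass G C ∧ ∃ x ∈ S, ∃ y ∈ S, G.Adj x y ∧ s(x, y) ∈ C}

/-- With the `v₀`-orientation, `b ∈ S` is the basis of `S`: all edges of `S`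
incident to `b` are outgoing from `b`. -/
def IsBasis (G : SimpleGraph V) (v₀ : V) (S : Set V) (b : V) : Prop :=
  b ∈ S ∧ ∀ w ∈ S, G.Adj b w → G.dist v₀ b < G.dist v₀ w

/-- With the `v₀`-orientation, `b ∈ S` is the anti-basis of `S`: all edges of `S`
incident to `b` are ingoing to `b`. -/
def IsAntiBasis (G : SimpleGraph V) (v₀ : V) (S : Set V) (b : V) : Prop :=
  b ∈ S ∧ ∀ w ∈ S, G.Adj b w → G.dist v₀ w < G.dist v₀ b

/-- `ℰ⁻(v)` : the Θ-classes containing at least one edge ingoing to `v`. -/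
def inClasses (G : SimpleGraph V) (v₀ v : V) : Set (Set (Sym2 V)) :=
  {C | ThetaClass G C ∧ ∃ u, G.Adj u v ∧ G.dist v₀ u < G.dist v₀ v ∧ s(u, v) ∈ C}

/-- The ladder set `L_{u,v}`: classes of the signature `σ_{u,v}` having an
edge incident to `u`. -/
def ladder (G : SimpleGraph V) (u v : V) : Set (Set (Sym2 V)) :=
  {C | C ∈ signature G u v ∧ ∃ w, G.Adj u w ∧ s(u, w) ∈ C}

/-- A POF each of whose classes has an edge outgoing from `u`. -/
def OutgoingPOF (G : SimpleGraph V) (v₀ u : V) (L : Set (Set (Sym2 V))) : Prop :=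
  IsPOF G L ∧ ∀ C ∈ L, ∃ w, G.Adj u w ∧ G.dist v₀ u < G.dist v₀ w ∧ s(u, w) ∈ C

/-- A POF each of whose classes has an edge ingoing to `u`. -/
def IngoingPOF (G : SimpleGraph V) (v₀ u : V) (X : Set (Set (Sym2 V))) : Prop :=
  IsPOF G X ∧ ∀ C ∈ X, ∃ w, G.Adj w u ∧ G.dist v₀ w < G.dist v₀ u ∧ s(w, u) ∈ C

/-- `m` is a median of the triple `x, y, z`. -/
def IsMedian (G : SimpleGraph V) (x y z m : V) : Prop :=
  m ∈ interval G x y ∧ m ∈ interval G y z ∧ m ∈ interval G z x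

/-- `b` is the milestone following `a` on the way to `v`: `b` is the anti-basis of
the induced hypercube with basis `a` whose Θ-classes are the ladder set `L_{a,v}`. -/
def NextMilestone (G : SimpleGraph V) (v₀ v a b : V) : Prop :=
  ∃ S : Set V, IsInducedCube G S ∧ IsBasis G v₀ S a ∧ IsAntiBasis G v₀ S b ∧
    cubeClasses G S = ladder G a v

/-- The milestone set `Π(u,v)`: vertices obtained from `u` by iterating the
next-milestone step towards `v`. -/
def MilestoneSet (G : SimpleGraph V) (v₀ u v : V) : Set V :=
  {p | Relation.ReflTransGen (fun a b => NextMilestone G v₀ v a b) u p}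

/-- The penultimate milestone `π̄(u,v)`: the milestone of `Π(u,v)` other than `v`
closest to `v`, i.e. whose next milestone is `v` itself. -/
def IsPenultimate (G : SimpleGraph V) (v₀ u v p : V) : Prop :=
  p ∈ MilestoneSet G v₀ u v ∧ p ≠ v ∧ NextMilestone G v₀ v p v

/-- A convex set of vertices. -/
def ConvexSet (G : SimpleGraph V) (H : Set V) : Prop :=
  ∀ u ∈ H, ∀ v ∈ H, interval G u v ⊆ H

/-- A gated set of vertices: each vertex has a gate in `H`. -/
def GatedSet (G : SimpleGraph V) (H : Set V) : Prop :=
  ∀ x : V, ∃ g ∈ H, ∀ h ∈ H, g ∈ interval G x h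


section Aux
variable {G : SimpleGraph V}

lemma dist_zero (hc : G.Connected) {u v : V} (h : G.dist u v = 0) : u = v :=
  (hc.dist_eq_zero_iff).mp h

lemma adj_dist {u v : V} (h : G.Adj u v) : G.dist u v = 1 :=
  SimpleGraph.dist_eq_one_iff_adj.mpr h

lemma dcomm (u v : V) : G.dist u v = G.dist v u := SimpleGraph.dist_comm

lemma tri (hc : G.Connected) (u v w : V) : G.dist u w ≤ G.dist u v + G.dist v w :=
  hc.dist_triangle

lemma not_equidist (hmed : MedianGraph G) {a b : V} (h : G.Adj a b) (w : V) :
    G.dist w a ≠ G.dist w b := by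
  intro heq
  obtain ⟨m, ⟨h1, h2, h3⟩, -⟩ := hmed.2 w a b
  have h1' : G.dist w m + G.dist m a = G.dist w a := h1
  have h2' : G.dist a m + G.dist m b = G.dist a b := h2
  have h3' : G.dist b m + G.dist m w = G.dist b w := h3
  rw [adj_dist h] at h2'
  rcases Nat.eq_zero_or_pos (G.dist a m) with h0 | hpos
  · have hma : a = m := dist_zero hmed.1 h0
    subst hma
    rw [dcomm b a, adj_dist h, dcomm a w] at h3'
    rw [dcomm b w] at h3'
    omega
  · have hmb : G.dist m b = 0 := by omega
    have hmb' : m = b := dist_zero hmed.1 hmb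
    rw [hmb', dcomm b a, adj_dist h] at h1'
    omega

lemma adj_cases (hmed : MedianGraph G) {a b : V} (h : G.Adj a b) (w : V) :
    G.dist w b = G.dist w a + 1 ∨ G.dist w a = G.dist w b + 1 := by
  have t1 : G.dist w b ≤ G.dist w a + 1 := by
    have := tri hmed.1 w a b; rwa [adj_dist h] at this
  have t2 : G.dist w a ≤ G.dist w b + 1 := by
    have := tri hmed.1 w b a; rwa [adj_dist h.symm] at this
  have := not_equidist hmed h w
  omega


def Wside (G : SimpleGraph V) (a b : V) : Set V := {w | G.dist w a < G.dist w b}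

lemma mem_Wside {a b w : V} : w ∈ Wside G a b ↔ G.dist w a < G.dist w b := Iff.rfl

lemma Wside_total (hmed : MedianGraph G) {a b : V} (h : G.Adj a b) (w : V) :
    w ∈ Wside G a b ∨ w ∈ Wside G b a := by
  have := adj_cases hmed h w
  simp only [mem_Wside]; omega

lemma Wside_disj {a b w : V} (h1 : w ∈ Wside G a b) (h2 : w ∈ Wside G b a) : False := by
  simp only [mem_Wside] at *; omega

lemma Wside_succ (hmed : MedianGraph G) {a b w : V} (h : G.Adj a b)
    (hw : w ∈ Wside G a b) : G.dist w b = G.dist w a + 1 := by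
  have := adj_cases hmed h w
  simp only [mem_Wside] at hw; omega

lemma self_mem_Wside (hc : G.Connected) {a b : V} (h : G.Adj a b) : a ∈ Wside G a b := by
  simp only [mem_Wside, SimpleGraph.dist_self, adj_dist h]; omega

lemma not_mem_Wside_self {a b : V} : a ∉ Wside G b a := by
  simp only [mem_Wside, SimpleGraph.dist_self]; omega

lemma sq_symm {u v x y : V} (h : IsSquare G u v x y) : IsSquare G x y u v := by
  obtain ⟨h1, h2, h3, h4, h5, h6⟩ := h
  exact ⟨h2, h1, h3.symm, h4.symm, h6.symm, h5.symm⟩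

lemma square_diag (hmed : MedianGraph G) {u v x : V} (huv : G.Adj u v) (hux : G.Adj u x)
    (hvx : v ≠ x) : G.dist v x = 2 := by
  have hle : G.dist v x ≤ 2 := by
    have := tri hmed.1 v u x; rw [dcomm v u, adj_dist huv, adj_dist hux] at this; omega
  have hne0 : G.dist v x ≠ 0 := fun h0 => hvx (dist_zero hmed.1 h0)
  have hne1 : G.dist v x ≠ 1 := by
    intro h1
    have hadj : G.Adj v x := SimpleGraph.dist_eq_one_iff_adj.mp h1
    have := not_equidist hmed huv x
    rw [dcomm x u, adj_dist hux, dcomm x v, adj_dist hadj] at this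
    exact this rfl
  omega

/-- Key square lemma: distances transfer across opposite edges of a square. -/
lemma square_W (hmed : MedianGraph G) {u v x y : V} (hsq : IsSquare G u v x y) :
    Wside G u v ⊆ Wside G x y := by
  obtain ⟨h1, h2, h3, h4, h5, h6⟩ := hsq
  intro w hw
  by_contra hwn
  have hwyx : w ∈ Wside G y x := (Wside_total hmed h2 w).resolve_left hwn
  have hdv : G.dist w v = G.dist w u + 1 := Wside_succ hmed h1 hw
  have hdx : G.dist w x = G.dist w y + 1 := Wside_succ hmed h2.symm hwyx
  rcases adj_cases hmed h3 w with hA | hB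
  · -- dist w x = dist w u + 1, so dist w y = dist w u
    have hdy : G.dist w y = G.dist w u := by omega
    have hdvx : G.dist v x = 2 := square_diag hmed h1 h3 h6
    obtain ⟨m, -, hun⟩ := hmed.2 w v x
    have hu : u = m := by
      apply hun
      refine ⟨?_, ?_, ?_⟩
      · show G.dist w u + G.dist u v = G.dist w v
        rw [adj_dist h1]; omega
      · show G.dist v u + G.dist u x = G.dist v x
        rw [dcomm v u, adj_dist h1, adj_dist h3]; omega
      · show G.dist x u + G.dist u w = G.dist x w
        rw [dcomm x u, adj_dist h3, dcomm u w, dcomm x w]; omega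
    have hy : y = m := by
      apply hun
      refine ⟨?_, ?_, ?_⟩
      · show G.dist w y + G.dist y v = G.dist w v
        rw [dcomm y v, adj_dist h4]; omega
      · show G.dist v y + G.dist y x = G.dist v x
        rw [adj_dist h4, dcomm y x, adj_dist h2]; omega
      · show G.dist x y + G.dist y w = G.dist x w
        rw [adj_dist h2, dcomm y w, dcomm x w]; omega
    exact h5 (hu.trans hy.symm)
  · -- dist w u = dist w x + 1
    have := adj_cases hmed h4 w
    omega

lemma square_W_eq (hmed : MedianGraph G) {u v x y : V} (hsq : IsSquare G u v x y) :
    Wside G u v = Wside G x y :=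
  Set.Subset.antisymm (square_W hmed hsq) (square_W hmed (sq_symm hsq))


end Aux

section Aux2
variable {G : SimpleGraph V}

lemma theta0_symm : Symmetric (Theta0 G) := by
  rintro e f ⟨u, v, x, y, hsq, he, hf⟩
  exact ⟨x, y, u, v, sq_symm hsq, hf, he⟩

lemma theta_symm {e f : Sym2 V} (h : Theta G e f) : Theta G f e :=
  ⟨h.2.1, h.1, (by haveI : Std.Symm (Theta0 G) := ⟨fun a b hab => theta0_symm hab⟩; exact Relation.ReflTransGen.symmetric.symm _ _ h.2.2)⟩

lemma theta_trans {e f g : Sym2 V} (h : Theta G e f) (h' : Theta G f g) : Theta G e g :=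
  ⟨h.1, h'.2.1, h.2.2.trans h'.2.2⟩

lemma theta_refl {e : Sym2 V} (he : e ∈ G.edgeSet) : Theta G e e :=
  ⟨he, he, Relation.ReflTransGen.refl⟩

/-- Djoković: an edge crossing the `(a,b)`-split is Θ-related to `ab`. -/
lemma cross (hmed : MedianGraph G) {a b : V} (hab : G.Adj a b) :
    ∀ k (p q : V), G.dist p a = k → p ∈ Wside G a b → q ∈ Wside G b a → G.Adj p q →
      Theta G s(a, b) s(p, q) := by
  intro k
  induction k using Nat.strong_induction_on with
  | _ k IH =>
    intro p q hk hp hq hpq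
    have hpb : G.dist p b = k + 1 := by
      have := Wside_succ hmed hab hp; omega
    have hqab : G.dist q a = G.dist q b + 1 := Wside_succ hmed hab.symm hq
    have htr : G.dist p b ≤ 1 + G.dist q b := by
      have := tri hmed.1 p q b; rw [adj_dist hpq] at this; omega
    have hqa : G.dist q a = k + 1 := by
      have h2 := adj_cases hmed hpq a
      rw [dcomm a p, dcomm a q, hk] at h2; omega
    have hqb : G.dist q b = k := by omega
    rcases Nat.eq_zero_or_pos k with h0 | hposk
    · subst h0
      have hpa : p = a := dist_zero hmed.1 hk
      have hqb' : q = b := dist_zero hmed.1 hqb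
      subst hpa; subst hqb'
      exact theta_refl (G.mem_edgeSet.mpr hab)
    · obtain ⟨k', rfl⟩ : ∃ k', k = k' + 1 := ⟨k - 1, by omega⟩
      obtain ⟨w, hw⟩ := (hmed.1 p a).exists_walk_length_eq_dist
      rw [hk] at hw
      cases w with
      | nil => simp at hw
      | @cons _ p₁ _ hadj t =>
        rw [SimpleGraph.Walk.length_cons] at hw
        have hta : G.dist p₁ a ≤ k' := by
          have := SimpleGraph.dist_le t; omega
        have hp₁a : G.dist p₁ a = k' := by
          have := tri hmed.1 p p₁ a; rw [adj_dist hadj] at this; omega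
        have hp₁b : G.dist p₁ b = k' + 1 := by
          have h1 := tri hmed.1 p p₁ b
          rw [adj_dist hadj] at h1
          have h2 := adj_cases hmed hab p₁
          omega
        have hp₁ : p₁ ∈ Wside G a b := by rw [mem_Wside]; omega
        obtain ⟨q₁, ⟨m1, m2, m3⟩, -⟩ := hmed.2 p₁ q b
        have m1' : G.dist p₁ q₁ + G.dist q₁ q = G.dist p₁ q := m1
        have m2' : G.dist q q₁ + G.dist q₁ b = k' + 1 := by
          have : G.dist q q₁ + G.dist q₁ b = G.dist q b := m2; omega
        have m3' : G.dist b q₁ + G.dist q₁ p₁ = k' + 1 := by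
          have : G.dist b q₁ + G.dist q₁ p₁ = G.dist b p₁ := m3
          rw [dcomm b p₁] at this; omega
        have hne : p₁ ≠ q := by
          intro hh; rw [hh] at hp₁a; omega
        have hd2 : G.dist p₁ q ≤ 2 := by
          have := tri hmed.1 p₁ p q
          rw [dcomm p₁ p, adj_dist hadj, adj_dist hpq] at this; omega
        have hdne : G.dist p₁ q ≠ 0 := fun hh => hne (dist_zero hmed.1 hh)
        have hteq : G.dist q₁ q = G.dist q₁ p₁ := by
          rw [dcomm b q₁] at m3'
          rw [dcomm q q₁] at m2'; omega
        have e1 : G.dist p₁ q₁ = G.dist q₁ q := by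
          rw [dcomm p₁ q₁]; exact hteq.symm
        have ht1 : G.dist q₁ q = 1 := by
          rw [e1] at m1'; omega
        have hq₁b : G.dist q₁ b = k' := by
          rw [dcomm q q₁, ht1] at m2'; omega
        have hq₁a : G.dist q₁ a = k' + 1 := by
          have h1 : G.dist q a ≤ G.dist q q₁ + G.dist q₁ a := tri hmed.1 q q₁ a
          have h2 : G.dist q₁ a ≤ G.dist q₁ p₁ + G.dist p₁ a := tri hmed.1 q₁ p₁ a
          rw [dcomm q q₁, ht1] at h1
          rw [← hteq, ht1] at h2
          omega
        have hq₁ : q₁ ∈ Wside G b a := by rw [mem_Wside]; omega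
        have hadjq : G.Adj q₁ q := SimpleGraph.dist_eq_one_iff_adj.mp ht1
        have hadjp : G.Adj p₁ q₁ :=
          SimpleGraph.dist_eq_one_iff_adj.mp (e1.trans ht1)
        have ht : Theta G s(a, b) s(p₁, q₁) :=
          IH k' (by omega) p₁ q₁ hp₁a hp₁ hq₁ hadjp
        have hsq : IsSquare G p₁ q₁ p q := by
          refine ⟨hadjp, hpq, hadj.symm, hadjq, hne, ?_⟩
          intro hh; rw [hh] at hq₁b; omega
        exact ⟨ht.1, G.mem_edgeSet.mpr hpq,
          ht.2.2.tail ⟨p₁, q₁, p, q, hsq, rfl, rfl⟩⟩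


lemma Wside_flip (hmed : MedianGraph G) {x y a b : V} (hxy : G.Adj x y) (hab : G.Adj a b)
    (heq : Wside G x y = Wside G a b) : Wside G y x = Wside G b a := by
  ext w
  constructor
  · intro hw
    rcases Wside_total hmed hab w with h | h
    · exact absurd (heq ▸ h : w ∈ Wside G x y) (fun hh => Wside_disj hh hw)
    · exact h
  · intro hw
    rcases Wside_total hmed hxy w with h | h
    · exact absurd (heq ▸ h : w ∈ Wside G a b) (fun hh => Wside_disj hh hw)
    · exact h

lemma theta_W (hmed : MedianGraph G) {a b : V} (hab : G.Adj a b) {f : Sym2 V}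
    (h : Relation.ReflTransGen (Theta0 G) s(a, b) f) :
    ∀ p q : V, f = s(p, q) →
      (Wside G p q = Wside G a b ∨ Wside G p q = Wside G b a) := by
  induction h with
  | refl =>
    intro p q hpq
    rcases Sym2.eq_iff.mp hpq with ⟨rfl, rfl⟩ | ⟨rfl, rfl⟩
    · exact Or.inl rfl
    · exact Or.inr rfl
  | tail h1 h2 ih =>
    obtain ⟨u, v, x, y, hsq, he', hf'⟩ := h2
    intro p q hpq
    have hW := ih u v he'
    have hWeq : Wside G x y = Wside G u v := (square_W_eq hmed hsq).symm
    have hadjxy : G.Adj x y := hsq.2.1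
    have hadjuv : G.Adj u v := hsq.1
    rcases Sym2.eq_iff.mp (hf'.symm.trans hpq) with ⟨rfl, rfl⟩ | ⟨rfl, rfl⟩
    · rw [hWeq]; exact hW
    · rcases hW with h | h
      · exact Or.inr (Wside_flip hmed hadjxy hab (hWeq.trans h))
      · left
        have := Wside_flip hmed hadjxy hab.symm (hWeq.trans h)
        rwa [show Wside G a b = Wside G a b from rfl] at this

lemma reach_preserve (hmed : MedianGraph G) {a b : V} (hab : G.Adj a b)
    {C : Set (Sym2 V)} (hC : ∀ f, Theta G s(a, b) f → f ∈ C)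
    {p q : V} (h : (G.deleteEdges C).Reachable p q) (hp : p ∈ Wside G a b) :
    q ∈ Wside G a b := by
  obtain ⟨w⟩ := h
  revert hp
  induction w with
  | nil => exact id
  | @cons p p₁ q hadj t ih =>
    intro hp
    rw [SimpleGraph.deleteEdges_adj] at hadj
    obtain ⟨ha, hns⟩ := hadj
    apply ih
    by_contra hn
    have hp₁ : p₁ ∈ Wside G b a := (Wside_total hmed hab p₁).resolve_left hn
    exact hns (hC _ (cross hmed hab (G.dist p a) p p₁ rfl hp hp₁ ha))

lemma sep (hmed : MedianGraph G) {a b : V} (hab : G.Adj a b)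
    {C : Set (Sym2 V)} (hC : ∀ f, f ∈ C ↔ Theta G s(a, b) f)
    {p q : V} (hpq : s(p, q) ∈ C) : ¬ (G.deleteEdges C).Reachable p q := by
  intro hreach
  have htheta := (hC _).mp hpq
  have hadjpq : G.Adj p q := G.mem_edgeSet.mp htheta.2.1
  have hC' : ∀ f, f ∈ C ↔ Theta G s(b, a) f := by
    intro f; rw [show s(b, a) = s(a, b) from Sym2.eq_swap]; exact hC f
  rcases theta_W hmed hab htheta.2.2 p q rfl with hW | hW
  · have hp : p ∈ Wside G a b := hW ▸ self_mem_Wside hmed.1 hadjpq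
    have hq : q ∈ Wside G a b :=
      reach_preserve hmed hab (fun f hf => (hC f).mpr hf) hreach hp
    exact not_mem_Wside_self (hW ▸ hq)
  · have hp : p ∈ Wside G b a := hW ▸ self_mem_Wside hmed.1 hadjpq
    have hq : q ∈ Wside G b a :=
      reach_preserve hmed hab.symm
        (fun f hf => (hC' f).mpr hf) hreach hp
    exact not_mem_Wside_self (hW ▸ hq)

lemma find_cross (hmed : MedianGraph G) {a b : V} (hab : G.Adj a b)
    {u y : V} (w : G.Walk u y) (hu : u ∈ Wside G a b) (hy : y ∈ Wside G b a) :
    ∃ (s t : V) (w1 : G.Walk u s) (w2 : G.Walk t y),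
      s ∈ Wside G a b ∧ t ∈ Wside G b a ∧ G.Adj s t ∧
      w1.length + 1 + w2.length = w.length := by
  revert hu
  induction w with
  | nil => exact fun hu => absurd hu (fun h => Wside_disj h hy)
  | @cons u v y' hadj p ih =>
    intro hu
    by_cases hv : v ∈ Wside G a b
    · obtain ⟨s, t, w1, w2, hs, ht, hst, hlen⟩ := ih hy hv
      refine ⟨s, t, SimpleGraph.Walk.cons hadj w1, w2, hs, ht, hst, ?_⟩
      simp only [SimpleGraph.Walk.length_cons]; omega
    · refine ⟨u, v, SimpleGraph.Walk.nil, p, hu,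
        (Wside_total hmed hab v).resolve_left hv, hadj, ?_⟩
      simp only [SimpleGraph.Walk.length_cons, SimpleGraph.Walk.length_nil]
      omega

lemma conv (hmed : MedianGraph G) {a b : V} (hab : G.Adj a b)
    {x y : V} (hx : x ∈ Wside G a b) (hy : y ∈ Wside G a b) :
    interval G x y ⊆ Wside G a b := by
  intro z hz
  have hz' : G.dist x z + G.dist z y = G.dist x y := hz
  by_contra hzn
  have hzb : z ∈ Wside G b a := (Wside_total hmed hab z).resolve_left hzn
  obtain ⟨w, hw⟩ := (hmed.1 x z).exists_walk_length_eq_dist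
  obtain ⟨s, t, w1, w2, hs, ht, hst, hlen⟩ := find_cross hmed hab w hx hzb
  have h1 : G.dist x s ≤ w1.length := SimpleGraph.dist_le w1
  have h2 : G.dist t z ≤ w2.length := SimpleGraph.dist_le w2
  have htheta := cross hmed hab (G.dist s a) s t rfl hs ht hst
  have hWst : Wside G s t = Wside G a b := by
    rcases theta_W hmed hab htheta.2.2 s t rfl with h | h
    · exact h
    · exact absurd (h ▸ self_mem_Wside hmed.1 hst) (fun hh => Wside_disj hs hh)
  have hys : y ∈ Wside G s t := by rw [hWst]; exact hy
  have h3 : G.dist y t = G.dist y s + 1 := Wside_succ hmed hst hys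
  have h4 : G.dist y t ≤ G.dist y z + G.dist z t := tri hmed.1 y z t
  have h5 : G.dist x y ≤ G.dist x s + G.dist s y := tri hmed.1 x s y
  have c1 : G.dist y z = G.dist z y := dcomm y z
  have c2 : G.dist z t = G.dist t z := dcomm z t
  have c3 : G.dist s y = G.dist y s := dcomm s y
  omega


lemma noadj_aux (hmed : MedianGraph G) {a b u v x y : V} (hab : G.Adj a b)
    (hsq : IsSquare G u v x y) (c1 : Wside G u v = Wside G a b)
    (hux : Theta G s(a, b) s(u, x)) (hxy : Theta G s(a, b) s(x, y)) : False := by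
  obtain ⟨h1, h2, h3, h4, h5, h6⟩ := hsq
  have hWux : Wside G u x = Wside G a b := by
    rcases theta_W hmed hab hux.2.2 u x rfl with h | h
    · exact h
    · exfalso
      exact Wside_disj (c1 ▸ self_mem_Wside hmed.1 h1) (h ▸ self_mem_Wside hmed.1 h3)
  have hxnot : x ∉ Wside G a b := fun hh => not_mem_Wside_self (hWux ▸ hh)
  have hWxy : Wside G x y = Wside G b a := by
    rcases theta_W hmed hab hxy.2.2 x y rfl with h | h
    · exact absurd (h ▸ self_mem_Wside hmed.1 h2) hxnot
    · exact h
  have hunotxy : u ∉ Wside G x y := by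
    rw [hWxy]
    exact fun hh => Wside_disj (c1 ▸ self_mem_Wside hmed.1 h1) hh
  have hduy : G.dist u y = 1 := by
    rw [mem_Wside] at hunotxy
    push_neg at hunotxy
    rw [adj_dist h3] at hunotxy
    have : G.dist u y ≠ 0 := fun hh => h5 (dist_zero hmed.1 hh)
    omega
  have hvxy : v ∈ Wside G x y := by
    rw [hWxy]
    rcases Wside_total hmed hab v with h | h
    · exact absurd (c1.symm ▸ h) not_mem_Wside_self
    · exact h
  rw [mem_Wside] at hvxy
  have hvy : G.dist v y = 1 := adj_dist h4
  have : G.dist v x = 0 := by omega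
  exact h6 (dist_zero hmed.1 this)

lemma noadj (hmed : MedianGraph G) {a b u v x y : V} (hab : G.Adj a b)
    (hsq : IsSquare G u v x y)
    (huv : Theta G s(a, b) s(u, v)) (hxy : Theta G s(a, b) s(x, y))
    (hux : Theta G s(a, b) s(u, x)) : False := by
  have hswap : (s(b, a) : Sym2 V) = s(a, b) := Sym2.eq_swap
  rcases theta_W hmed hab huv.2.2 u v rfl with c1 | c1
  · exact noadj_aux hmed hab hsq c1 hux hxy
  · refine noadj_aux hmed hab.symm hsq c1 ?_ ?_ <;> rw [hswap] <;> assumption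


end Aux2

section Aux3
variable {G : SimpleGraph V}

lemma hs_mem_union {C : Set (Sym2 V)} {H H' : Set V}
    (hhs : IsHalfspacePair G C H H') (p : V) : p ∈ H ∨ p ∈ H' := by
  have := hhs.2.2.2.1
  have hp : p ∈ H ∪ H' := by rw [this]; trivial
  exact hp

lemma hs_opp {C : Set (Sym2 V)} {H H' : Set V}
    (hhs : IsHalfspacePair G C H H') {p q : V}
    (hnr : ¬ (G.deleteEdges C).Reachable p q) :
    (p ∈ H ∧ q ∈ H') ∨ (p ∈ H' ∧ q ∈ H) := by
  rcases hs_mem_union hhs p with hp | hp <;> rcases hs_mem_union hhs q with hq | hq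
  · exact absurd (hhs.2.2.2.2.1 p hp q hq) hnr
  · exact Or.inl ⟨hp, hq⟩
  · exact Or.inr ⟨hp, hq⟩
  · exact absurd (hhs.2.2.2.2.2.1 p hp q hq) hnr

lemma hs_same {C : Set (Sym2 V)} {H H' : Set V}
    (hhs : IsHalfspacePair G C H H') {p q : V}
    (hr : (G.deleteEdges C).Reachable p q) :
    (p ∈ H ∧ q ∈ H) ∨ (p ∈ H' ∧ q ∈ H') := by
  rcases hs_mem_union hhs p with hp | hp <;> rcases hs_mem_union hhs q with hq | hq
  · exact Or.inl ⟨hp, hq⟩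
  · exact absurd hr (hhs.2.2.2.2.2.2 p hp q hq)
  · exact absurd hr.symm (hhs.2.2.2.2.2.2 q hq p hp)
  · exact Or.inr ⟨hp, hq⟩

lemma pick_same {A B : Set V} (hd : Disjoint A B) {p q : V} (hp : p ∈ A)
    (h : (p ∈ A ∧ q ∈ A) ∨ (p ∈ B ∧ q ∈ B)) : q ∈ A := by
  rcases h with ⟨-, hq⟩ | ⟨hp', -⟩
  · exact hq
  · exact (Set.disjoint_left.mp hd hp hp').elim

lemma pick_opp {A B : Set V} (hd : Disjoint A B) {p q : V} (hp : p ∈ A)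
    (h : (p ∈ A ∧ q ∈ B) ∨ (p ∈ B ∧ q ∈ A)) : q ∈ B := by
  rcases h with ⟨-, hq⟩ | ⟨hp', -⟩
  · exact hq
  · exact (Set.disjoint_left.mp hd hp hp').elim

lemma hs_align_aux (hmed : MedianGraph G) {a b : V} (hab : G.Adj a b)
    {C : Set (Sym2 V)} (hC : ∀ f, f ∈ C ↔ Theta G s(a, b) f)
    {H H' : Set V} (hhs : IsHalfspacePair G C H H')
    (haH : a ∈ H) (hbH' : b ∈ H') :
    H = Wside G a b ∧ H' = Wside G b a := by
  have hC' : ∀ f, f ∈ C ↔ Theta G s(b, a) f := by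
    intro f; rw [show (s(b, a) : Sym2 V) = s(a, b) from Sym2.eq_swap]; exact hC f
  have hHsub : H ⊆ Wside G a b := by
    intro w hw
    exact reach_preserve hmed hab (fun f hf => (hC f).mpr hf)
      (hhs.2.2.2.2.1 a haH w hw) (self_mem_Wside hmed.1 hab)
  have hH'sub : H' ⊆ Wside G b a := by
    intro w hw
    exact reach_preserve hmed hab.symm (fun f hf => (hC' f).mpr hf)
      (hhs.2.2.2.2.2.1 b hbH' w hw) (self_mem_Wside hmed.1 hab.symm)
  constructor
  · apply Set.Subset.antisymm hHsub
    intro w hw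
    rcases hs_mem_union hhs w with h | h
    · exact h
    · exact (Wside_disj hw (hH'sub h)).elim
  · apply Set.Subset.antisymm hH'sub
    intro w hw
    rcases hs_mem_union hhs w with h | h
    · exact (Wside_disj (hHsub h) hw).elim
    · exact h

lemma hs_align (hmed : MedianGraph G) {a b : V} (hab : G.Adj a b)
    {C : Set (Sym2 V)} (hC : ∀ f, f ∈ C ↔ Theta G s(a, b) f)
    {H H' : Set V} (hhs : IsHalfspacePair G C H H') :
    (H = Wside G a b ∧ H' = Wside G b a) ∨ (H = Wside G b a ∧ H' = Wside G a b) := by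
  have hC' : ∀ f, f ∈ C ↔ Theta G s(b, a) f := by
    intro f; rw [show (s(b, a) : Sym2 V) = s(a, b) from Sym2.eq_swap]; exact hC f
  have hmemab : s(a, b) ∈ C := (hC _).mpr (theta_refl (G.mem_edgeSet.mpr hab))
  have hnr := sep hmed hab hC hmemab
  rcases hs_opp hhs hnr with ⟨ha, hb⟩ | ⟨ha, hb⟩
  · exact Or.inl (hs_align_aux hmed hab hC hhs ha hb)
  · exact Or.inr (hs_align_aux hmed hab.symm hC' hhs hb ha)


lemma reverse_core (hmed : MedianGraph G) {a₁ b₁ a₂ b₂ : V}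
    (hab₁ : G.Adj a₁ b₁) (hab₂ : G.Adj a₂ b₂)
    {C₁ C₂ : Set (Sym2 V)}
    (hC₁ : ∀ f, f ∈ C₁ ↔ Theta G s(a₁, b₁) f)
    (hC₂ : ∀ f, f ∈ C₂ ↔ Theta G s(a₂, b₂) f)
    (hA : (Wside G a₁ b₁ ∩ Wside G a₂ b₂).Nonempty)
    (hB : (Wside G a₁ b₁ ∩ Wside G b₂ a₂).Nonempty)
    (hCC : (Wside G b₁ a₁ ∩ Wside G a₂ b₂).Nonempty)
    (hD : (Wside G b₁ a₁ ∩ Wside G b₂ a₂).Nonempty) :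
    Orthogonal G C₁ C₂ := by
  classical
  set W1 := Wside G a₁ b₁ with hW1
  set W1' := Wside G b₁ a₁ with hW1'
  set W2 := Wside G a₂ b₂ with hW2
  set W2' := Wside G b₂ a₂ with hW2'
  -- no edge crosses both splits
  have hndc : ∀ z n : V, G.Adj z n → z ∈ W1 → n ∈ W1' →
      ((z ∈ W2 ∧ n ∈ W2') ∨ (z ∈ W2' ∧ n ∈ W2)) → False := by
    intro z n hadj hz1 hn1 h2
    have t1 : Theta G s(a₁, b₁) s(z, n) :=
      cross hmed hab₁ (G.dist z a₁) z n rfl hz1 hn1 hadj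
    have t2 : Theta G s(a₂, b₂) s(z, n) := by
      rcases h2 with ⟨hz2, hn2⟩ | ⟨hz2, hn2⟩
      · exact cross hmed hab₂ (G.dist z a₂) z n rfl hz2 hn2 hadj
      · have := cross hmed hab₂ (G.dist n a₂) n z rfl hn2 hz2 hadj.symm
        rwa [show (s(n, z) : Sym2 V) = s(z, n) from Sym2.eq_swap] at this
    have t3 : Theta G s(a₁, b₁) s(a₂, b₂) := theta_trans t1 (theta_symm t2)
    rcases theta_W hmed hab₁ t3.2.2 a₂ b₂ rfl with h | h
    · have h' : W2' = W1' := Wside_flip hmed hab₂ hab₁ h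
      obtain ⟨w, hw1, hw2⟩ := hB
      rw [h'] at hw2
      exact Wside_disj hw1 hw2
    · obtain ⟨w, hw1, hw2⟩ := hA
      rw [hW2, h] at hw2
      exact Wside_disj hw1 hw2
  -- minimal pair between opposite quadrants B and C
  set P : Set ℕ := {k | ∃ p ∈ W1 ∩ W2', ∃ q ∈ W1' ∩ W2, G.dist p q = k} with hP
  have hPne : P.Nonempty := by
    obtain ⟨p₀, hp₀⟩ := hB
    obtain ⟨q₀, hq₀⟩ := hCC
    exact ⟨G.dist p₀ q₀, p₀, hp₀, q₀, hq₀, rfl⟩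
  obtain ⟨p, ⟨hp1, hp2⟩, q, ⟨hq1, hq2⟩, hdmin⟩ := Nat.sInf_mem hPne
  set dmin := sInf P with hdm
  have hmin : ∀ p' q' : V, p' ∈ W1 → p' ∈ W2' → q' ∈ W1' → q' ∈ W2 →
      dmin ≤ G.dist p' q' :=
    fun p' q' h1 h2 h3 h4 => Nat.sInf_le ⟨p', ⟨h1, h2⟩, q', ⟨h3, h4⟩, rfl⟩
  have hpq_ne : p ≠ q := fun h => Wside_disj (h ▸ hp1) hq1
  have hd0 : dmin ≠ 0 := fun h => hpq_ne (dist_zero hmed.1 (hdmin.trans h))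
  have hd1 : dmin ≠ 1 := by
    intro h
    have hadj : G.Adj p q := SimpleGraph.dist_eq_one_iff_adj.mp (hdmin.trans h)
    exact hndc p q hadj hp1 hq1 (Or.inr ⟨hp2, hq2⟩)
  -- key relation
  have hkey : ∀ z n : V, z ∈ W1 → z ∈ W2 → z ∈ interval G p q →
      n ∈ W1' → n ∈ W2' → n ∈ interval G p q →
      G.dist p z + G.dist p n = dmin := by
    intro z n hz1 hz2 hzI hn1 hn2 hnI
    have hzI' : G.dist p z + G.dist z q = dmin := by
      have : G.dist p z + G.dist z q = G.dist p q := hzI; omega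
    have hnI' : G.dist p n + G.dist n q = dmin := by
      have : G.dist p n + G.dist n q = G.dist p q := hnI; omega
    -- first median : m = q
    obtain ⟨m, ⟨i1, i2, i3⟩, -⟩ := hmed.2 z n q
    have i1' : G.dist z m + G.dist m n = G.dist z n := i1
    have i2' : G.dist n m + G.dist m q = G.dist n q := i2
    have i3' : G.dist q m + G.dist m z = G.dist q z := i3
    have hm1 : m ∈ W1' := conv hmed hab₁.symm hn1 hq1 i2
    have hm2 : m ∈ W2 := conv hmed hab₂ hq2 hz2 i3
    have hmq : m = q := by
      have hle := hmin p m hp1 hp2 hm1 hm2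
      have htri : G.dist p m ≤ G.dist p z + G.dist z m := tri hmed.1 p z m
      have c1 : G.dist z m = G.dist m z := dcomm z m
      have c2 : G.dist z q = G.dist q z := dcomm z q
      have c3 : G.dist q m = G.dist m q := dcomm q m
      have : G.dist m q = 0 := by omega
      exact dist_zero hmed.1 this
    rw [hmq] at i1'
    have E1 : G.dist z q + G.dist q n = G.dist z n := i1'
    -- second median : m' = p
    obtain ⟨m', ⟨j1, j2, j3⟩, -⟩ := hmed.2 z n p
    have j1' : G.dist z m' + G.dist m' n = G.dist z n := j1
    have j2' : G.dist n m' + G.dist m' p = G.dist n p := j2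
    have j3' : G.dist p m' + G.dist m' z = G.dist p z := j3
    have hm'1 : m' ∈ W1 := conv hmed hab₁ hp1 hz1 j3
    have hm'2 : m' ∈ W2' := conv hmed hab₂.symm hn2 hp2 j2
    have hm'p : m' = p := by
      have hle := hmin m' q hm'1 hm'2 hq1 hq2
      have htri : G.dist m' q ≤ G.dist m' z + G.dist z q := tri hmed.1 m' z q
      have c1 : G.dist m' z = G.dist z m' := dcomm m' z
      have : G.dist m' p = 0 := by rw [dcomm m' p]; omega
      exact dist_zero hmed.1 this
    rw [hm'p] at j1'
    have E2 : G.dist z p + G.dist p n = G.dist z n := j1'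
    have c1 : G.dist z p = G.dist p z := dcomm z p
    have c2 : G.dist q n = G.dist n q := dcomm q n
    omega
  -- the two special interval points
  obtain ⟨a₀, ha01, ha02⟩ := hA
  obtain ⟨d₀, hd01, hd02⟩ := hD
  obtain ⟨nA, ⟨k1, k2, k3⟩, -⟩ := hmed.2 p q a₀
  have k1' : G.dist p nA + G.dist nA q = G.dist p q := k1
  have hnA1 : nA ∈ W1 := conv hmed hab₁ ha01 hp1 k3
  have hnA2 : nA ∈ W2 := conv hmed hab₂ hq2 ha02 k2
  have hnAI : nA ∈ interval G p q := k1
  obtain ⟨nD, ⟨l1, l2, l3⟩, -⟩ := hmed.2 p q d₀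
  have l1' : G.dist p nD + G.dist nD q = G.dist p q := l1
  have hnD1 : nD ∈ W1' := conv hmed hab₁.symm hq1 hd01 l2
  have hnD2 : nD ∈ W2' := conv hmed hab₂.symm hd02 hp2 l3
  have hnDI : nD ∈ interval G p q := l1
  -- interval vertices other than p,q lie in the two diagonal quadrants
  have hquad : ∀ z : V, z ∈ interval G p q → z ≠ p → z ≠ q →
      (z ∈ W1 ∧ z ∈ W2) ∨ (z ∈ W1' ∧ z ∈ W2') := by
    intro z hzI hzp hzq
    have hzI' : G.dist p z + G.dist z q = dmin := by
      have : G.dist p z + G.dist z q = G.dist p q := hzI; omega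
    have hzp' : G.dist p z ≠ 0 := fun h => hzp (dist_zero hmed.1 ((dcomm z p).trans h))
    have hzq' : G.dist z q ≠ 0 := fun h => hzq (dist_zero hmed.1 h)
    rcases Wside_total hmed hab₁ z with h1 | h1 <;>
      rcases Wside_total hmed hab₂ z with h2 | h2
    · exact Or.inl ⟨h1, h2⟩
    · -- z ∈ W1 ∩ W2' : pair (z,q) contradicts minimality
      exfalso
      have := hmin z q h1 h2 hq1 hq2
      omega
    · -- z ∈ W1' ∩ W2 : pair (p,z) contradicts minimality
      exfalso
      have := hmin p z hp1 hp2 h1 h2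
      omega
    · exact Or.inr ⟨h1, h2⟩
  -- walking along a geodesic from p towards q
  have hstep : ∀ z : V, z ∈ interval G p q → z ≠ q →
      ∃ z', G.Adj z z' ∧ z' ∈ interval G p q ∧ G.dist p z' = G.dist p z + 1 := by
    intro z hzI hzq
    have hzI' : G.dist p z + G.dist z q = dmin := by
      have : G.dist p z + G.dist z q = G.dist p q := hzI; omega
    have hzq0 : G.dist z q ≠ 0 := fun h => hzq (dist_zero hmed.1 h)
    obtain ⟨w, hw⟩ := (hmed.1 z q).exists_walk_length_eq_dist
    cases w with
    | nil => exact absurd rfl hzq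
    | @cons _ z' _ hadj t =>
      rw [SimpleGraph.Walk.length_cons] at hw
      have h1 : G.dist z' q ≤ t.length := SimpleGraph.dist_le t
      have h2 : G.dist z q ≤ 1 + G.dist z' q := by
        have := tri hmed.1 z z' q; rw [adj_dist hadj] at this; omega
      have h3 : G.dist z' q = t.length := by omega
      have h4 : G.dist p z' ≤ G.dist p z + 1 := by
        have := tri hmed.1 p z z'; rw [adj_dist hadj] at this; omega
      have h5 : dmin ≤ G.dist p z' + G.dist z' q := by
        have := tri hmed.1 p z' q; omega
      refine ⟨z', hadj, ?_, by omega⟩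
      show G.dist p z' + G.dist z' q = G.dist p q
      omega
  -- dmin = 2
  have hd2 : dmin = 2 := by
    by_contra hne
    have hd3 : 3 ≤ dmin := by omega
    have hpI : p ∈ interval G p q := by
      show G.dist p p + G.dist p q = G.dist p q
      simp [SimpleGraph.dist_self]
    obtain ⟨z1, hz1adj, hz1I, hz1d⟩ := hstep p hpI hpq_ne
    rw [SimpleGraph.dist_self] at hz1d
    have hz1q : z1 ≠ q := by
      intro h; rw [h] at hz1d; omega
    obtain ⟨z2, hz2adj, hz2I, hz2d⟩ := hstep z1 hz1I hz1q
    rw [hz1d] at hz2d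
    have hz1p : z1 ≠ p := by
      intro h; rw [h, SimpleGraph.dist_self] at hz1d; omega
    have hz2p : z2 ≠ p := by
      intro h; rw [h, SimpleGraph.dist_self] at hz2d; omega
    have hz2q : z2 ≠ q := by
      intro h; rw [h] at hz2d; omega
    rcases hquad z1 hz1I hz1p hz1q with ⟨ha1, ha2⟩ | ⟨ha1, ha2⟩ <;>
      rcases hquad z2 hz2I hz2p hz2q with ⟨hb1, hb2⟩ | ⟨hb1, hb2⟩
    · have e1 := hkey z1 nD ha1 ha2 hz1I hnD1 hnD2 hnDI
      have e2 := hkey z2 nD hb1 hb2 hz2I hnD1 hnD2 hnDI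
      omega
    · have e1 := hkey z1 z2 ha1 ha2 hz1I hb1 hb2 hz2I
      exact hndc z1 z2 hz2adj ha1 hb1 (Or.inl ⟨ha2, hb2⟩)
    · have e1 := hkey z2 z1 hb1 hb2 hz2I ha1 ha2 hz1I
      exact hndc z2 z1 hz2adj.symm hb1 ha1 (Or.inl ⟨hb2, ha2⟩)
    · have e1 := hkey nA z1 hnA1 hnA2 hnAI ha1 ha2 hz1I
      have e2 := hkey nA z2 hnA1 hnA2 hnAI hb1 hb2 hz2I
      omega
  -- build the square
  have hnAp : nA ≠ p := fun h => Wside_disj hp2 (h ▸ hnA2)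
  have hnAq : nA ≠ q := fun h => Wside_disj (h ▸ hnA1) hq1
  have hnDp : nD ≠ p := fun h => Wside_disj (h ▸ hp1) hnD1
  have hnDq : nD ≠ q := fun h => Wside_disj hq2 (h ▸ hnD2)
  rw [hdmin, hd2] at k1' l1'
  have dpnA : G.dist p nA = 1 := by
    have h0 : G.dist p nA ≠ 0 := fun h => hnAp (dist_zero hmed.1 ((dcomm nA p).trans h))
    have h1 : G.dist nA q ≠ 0 := fun h => hnAq (dist_zero hmed.1 h)
    omega
  have dnAq : G.dist nA q = 1 := by omega
  have dpnD : G.dist p nD = 1 := by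
    have h0 : G.dist p nD ≠ 0 := fun h => hnDp (dist_zero hmed.1 ((dcomm nD p).trans h))
    have h1 : G.dist nD q ≠ 0 := fun h => hnDq (dist_zero hmed.1 h)
    omega
  have dnDq : G.dist nD q = 1 := by omega
  have adj_nAq : G.Adj nA q := SimpleGraph.dist_eq_one_iff_adj.mp dnAq
  have adj_pnD : G.Adj p nD := SimpleGraph.dist_eq_one_iff_adj.mp dpnD
  have adj_nAp : G.Adj nA p := (SimpleGraph.dist_eq_one_iff_adj.mp dpnA).symm
  have adj_qnD : G.Adj q nD := (SimpleGraph.dist_eq_one_iff_adj.mp dnDq).symm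
  have hnAnD : nA ≠ nD := fun h => Wside_disj hnA2 (h ▸ hnD2)
  refine ⟨nA, q, p, nD, ⟨adj_nAq, adj_pnD, adj_nAp, adj_qnD, hnAnD, hpq_ne.symm⟩,
    ?_, ?_, ?_, ?_⟩
  · exact (hC₁ _).mpr (cross hmed hab₁ (G.dist nA a₁) nA q rfl hnA1 hq1 adj_nAq)
  · exact (hC₁ _).mpr (cross hmed hab₁ (G.dist p a₁) p nD rfl hp1 hnD1 adj_pnD)
  · exact (hC₂ _).mpr (cross hmed hab₂ (G.dist nA a₂) nA p rfl hnA2 hp2 adj_nAp)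
  · exact (hC₂ _).mpr (cross hmed hab₂ (G.dist q a₂) q nD rfl hq2 hnD2 adj_qnD)

end Aux3

/-- In a median graph, two Θ-classes are orthogonal iff their splits
are incompatible, i.e. the four pairwise intersections of halfspaces are nonempty. -/
theorem orthogonal_iff_incompatible {V : Type*} [Fintype V] (G : SimpleGraph V)
    (hmed : MedianGraph G) (C₁ C₂ : Set (Sym2 V))
    (h₁ : ThetaClass G C₁) (h₂ : ThetaClass G C₂)
    (H₁ H₁' H₂ H₂' : Set V)
    (hH₁ : IsHalfspacePair G C₁ H₁ H₁') (hH₂ : IsHalfspacePair G C₂ H₂ H₂') :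
    Orthogonal G C₁ C₂ ↔
      ((H₁ ∩ H₂).Nonempty ∧ (H₁' ∩ H₂).Nonempty ∧
       (H₁ ∩ H₂').Nonempty ∧ (H₁' ∩ H₂').Nonempty) := by
  classical
  obtain ⟨e₁, he₁, hC1eq⟩ := h₁
  obtain ⟨e₂, he₂, hC2eq⟩ := h₂
  obtain ⟨a₁, b₁, rfl⟩ : ∃ a b, e₁ = s(a, b) := by
    induction e₁ using Sym2.ind with | _ a b => exact ⟨a, b, rfl⟩
  obtain ⟨a₂, b₂, rfl⟩ : ∃ a b, e₂ = s(a, b) := by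
    induction e₂ using Sym2.ind with | _ a b => exact ⟨a, b, rfl⟩
  have hab₁ : G.Adj a₁ b₁ := G.mem_edgeSet.mp he₁
  have hab₂ : G.Adj a₂ b₂ := G.mem_edgeSet.mp he₂
  have hC₁ : ∀ f, f ∈ C₁ ↔ Theta G s(a₁, b₁) f := by
    intro f; rw [hC1eq]; exact Iff.rfl
  have hC₂ : ∀ f, f ∈ C₂ ↔ Theta G s(a₂, b₂) f := by
    intro f; rw [hC2eq]; exact Iff.rfl
  have hC₁' : ∀ f, f ∈ C₁ ↔ Theta G s(b₁, a₁) f := by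
    intro f; rw [show (s(b₁, a₁) : Sym2 V) = s(a₁, b₁) from Sym2.eq_swap]; exact hC₁ f
  have hC₂' : ∀ f, f ∈ C₂ ↔ Theta G s(b₂, a₂) f := by
    intro f; rw [show (s(b₂, a₂) : Sym2 V) = s(a₂, b₂) from Sym2.eq_swap]; exact hC₂ f
  have hd₁ : Disjoint H₁ H₁' := hH₁.2.2.1
  have hd₂ : Disjoint H₂ H₂' := hH₂.2.2.1
  constructor
  · rintro ⟨u, v, x, y, hsq, huv1, hxy1, hux2, hvy2⟩
    obtain ⟨ad_uv, ad_xy, ad_ux, ad_vy, hne_uy, hne_vx⟩ := hsq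
    have tuv1 := (hC₁ _).mp huv1
    have txy1 := (hC₁ _).mp hxy1
    have tux2 := (hC₂ _).mp hux2
    have tvy2 := (hC₂ _).mp hvy2
    have hux_n1 : s(u, x) ∉ C₁ := fun hmem =>
      noadj hmed hab₁ ⟨ad_uv, ad_xy, ad_ux, ad_vy, hne_uy, hne_vx⟩ tuv1 txy1
        ((hC₁ _).mp hmem)
    have hvy_n1 : s(v, y) ∉ C₁ := by
      intro hmem
      have sq' : IsSquare G v u y x :=
        ⟨ad_uv.symm, ad_xy.symm, ad_vy, ad_ux, hne_vx, hne_uy⟩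
      refine noadj hmed hab₁ sq' ?_ ?_ ((hC₁ _).mp hmem)
      · rwa [show (s(v, u) : Sym2 V) = s(u, v) from Sym2.eq_swap]
      · rwa [show (s(y, x) : Sym2 V) = s(x, y) from Sym2.eq_swap]
    have huv_n2 : s(u, v) ∉ C₂ := by
      intro hmem
      have sq' : IsSquare G u x v y :=
        ⟨ad_ux, ad_vy, ad_uv, ad_xy, hne_uy, hne_vx.symm⟩
      exact noadj hmed hab₂ sq' tux2 tvy2 ((hC₂ _).mp hmem)
    have hxy_n2 : s(x, y) ∉ C₂ := by
      intro hmem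
      have sq' : IsSquare G x u y v :=
        ⟨ad_ux.symm, ad_vy.symm, ad_xy, ad_uv, hne_vx.symm, hne_uy⟩
      refine noadj hmed hab₂ sq' ?_ ?_ ((hC₂ _).mp hmem)
      · rwa [show (s(x, u) : Sym2 V) = s(u, x) from Sym2.eq_swap]
      · rwa [show (s(y, v) : Sym2 V) = s(v, y) from Sym2.eq_swap]
    have sep_uv := sep hmed hab₁ hC₁ huv1
    have sep_xy := sep hmed hab₁ hC₁ hxy1
    have sep_ux := sep hmed hab₂ hC₂ hux2
    have sep_vy := sep hmed hab₂ hC₂ hvy2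
    have r_ux : (G.deleteEdges C₁).Reachable u x :=
      (SimpleGraph.deleteEdges_adj.mpr ⟨ad_ux, hux_n1⟩).reachable
    have r_vy : (G.deleteEdges C₁).Reachable v y :=
      (SimpleGraph.deleteEdges_adj.mpr ⟨ad_vy, hvy_n1⟩).reachable
    have r_uv : (G.deleteEdges C₂).Reachable u v :=
      (SimpleGraph.deleteEdges_adj.mpr ⟨ad_uv, huv_n2⟩).reachable
    have r_xy : (G.deleteEdges C₂).Reachable x y :=
      (SimpleGraph.deleteEdges_adj.mpr ⟨ad_xy, hxy_n2⟩).reachable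
    have o1 := hs_opp hH₁ sep_uv
    have o2 := hs_opp hH₁ sep_xy
    have o3 := hs_opp hH₂ sep_ux
    have o4 := hs_opp hH₂ sep_vy
    have s1 := hs_same hH₁ r_ux
    have s2 := hs_same hH₁ r_vy
    have s3 := hs_same hH₂ r_uv
    have s4 := hs_same hH₂ r_xy
    rcases o1 with ⟨hu1, hv1⟩ | ⟨hu1, hv1⟩ <;> rcases o3 with ⟨hu2, hx2⟩ | ⟨hu2, hx2⟩
    · have hx1 : x ∈ H₁ := pick_same hd₁ hu1 s1
      have hy1 : y ∈ H₁' := pick_opp hd₁ hx1 o2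
      have hv2 : v ∈ H₂ := pick_same hd₂ hu2 s3
      have hy2 : y ∈ H₂' := pick_opp hd₂ hv2 o4
      exact ⟨⟨u, hu1, hu2⟩, ⟨v, hv1, hv2⟩, ⟨x, hx1, hx2⟩, ⟨y, hy1, hy2⟩⟩
    · have hx1 : x ∈ H₁ := pick_same hd₁ hu1 s1
      have hy1 : y ∈ H₁' := pick_opp hd₁ hx1 o2
      have hv2 : v ∈ H₂' := pick_same hd₂.symm hu2 s3.symm
      have hy2 : y ∈ H₂ := pick_opp hd₂.symm hv2 o4.symm
      exact ⟨⟨x, hx1, hx2⟩, ⟨y, hy1, hy2⟩, ⟨u, hu1, hu2⟩, ⟨v, hv1, hv2⟩⟩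
    · have hx1 : x ∈ H₁' := pick_same hd₁.symm hu1 s1.symm
      have hy1 : y ∈ H₁ := pick_opp hd₁.symm hx1 o2.symm
      have hv2 : v ∈ H₂ := pick_same hd₂ hu2 s3
      have hy2 : y ∈ H₂' := pick_opp hd₂ hv2 o4
      exact ⟨⟨v, hv1, hv2⟩, ⟨u, hu1, hu2⟩, ⟨y, hy1, hy2⟩, ⟨x, hx1, hx2⟩⟩
    · have hx1 : x ∈ H₁' := pick_same hd₁.symm hu1 s1.symm
      have hy1 : y ∈ H₁ := pick_opp hd₁.symm hx1 o2.symm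
      have hv2 : v ∈ H₂' := pick_same hd₂.symm hu2 s3.symm
      have hy2 : y ∈ H₂ := pick_opp hd₂.symm hv2 o4.symm
      exact ⟨⟨y, hy1, hy2⟩, ⟨x, hx1, hx2⟩, ⟨v, hv1, hv2⟩, ⟨u, hu1, hu2⟩⟩
  · rintro ⟨hA, hCq, hB, hD⟩
    -- hA : (H₁ ∩ H₂), hCq : (H₁' ∩ H₂), hB : (H₁ ∩ H₂'), hD : (H₁' ∩ H₂')
    rcases hs_align hmed hab₁ hC₁ hH₁ with ⟨e1, e1'⟩ | ⟨e1, e1'⟩ <;>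
      rcases hs_align hmed hab₂ hC₂ hH₂ with ⟨e2, e2'⟩ | ⟨e2, e2'⟩
    · exact reverse_core hmed hab₁ hab₂ hC₁ hC₂
        (by rw [← e1, ← e2]; exact hA) (by rw [← e1, ← e2']; exact hB)
        (by rw [← e1', ← e2]; exact hCq) (by rw [← e1', ← e2']; exact hD)
    · exact reverse_core hmed hab₁ hab₂.symm hC₁ hC₂'
        (by rw [← e1, ← e2]; exact hA) (by rw [← e1, ← e2']; exact hB)
        (by rw [← e1', ← e2]; exact hCq) (by rw [← e1', ← e2']; exact hD)
    · exact reverse_core hmed hab₁.symm hab₂ hC₁' hC₂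
        (by rw [← e1, ← e2]; exact hA) (by rw [← e1, ← e2']; exact hB)
        (by rw [← e1', ← e2]; exact hCq) (by rw [← e1', ← e2']; exact hD)
    · exact reverse_core hmed hab₁.symm hab₂.symm hC₁' hC₂'
        (by rw [← e1, ← e2]; exact hA) (by rw [← e1, ← e2']; exact hB)
        (by rw [← e1', ← e2]; exact hCq) (by rw [← e1', ← e2']; exact hD)

end MedianPaper
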